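/- Let r : ℤ → ℝ³ be a discrete space curve with t_j = r_{j+1} − r_j, and let k ∈ ℤ satisfy det[r_{k−1}, r_k, r_{k+1}] ≠ 0. With the centroaffine curvatures κ_k = det[r_k, r_{k+1}, r_{k+2}]/det[r_{k−1}, r_k, r_{k+1}], κ̄_k = det[r_{k+1}, t_{k−1}, r_{k+2}]/det[r_{k−1}, r_k, r_{k+1}] and torsion τ_k = det[t_{k−1}, t_k, t_{k+1}]/det[r_{k−1}, r_k, r_{k+1}], the discrete Frenet–Serret formula holds: r_{k+2} = κ_k · r_{k−1} + (−κ_k − κ̄_k) · r_k + (τ_k + κ̄_k + 1) · r_{k+1}. -/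

import Mathlib

/-- Determinant of the 3×3 matrix with columns `u`, `v`, `w`. -/
noncomputable def det3 (u v w : Fin 3 → ℝ) : ℝ :=
  (Matrix.transpose (Matrix.of ![u, v, w])).det

/-- The discrete Frenet–Serret formula:
`r (k+2) = κ • r (k-1) + (-κ - κ̄) • r k + (τ + κ̄ + 1) • r (k+1)`. -/
theorem discrete_frenet_serret (r : ℤ → Fin 3 → ℝ) (t : ℤ → Fin 3 → ℝ)
    (ht : ∀ j, t j = r (j + 1) - r j) (k : ℤ)
    (hnd : det3 (r (k - 1)) (r k) (r (k + 1)) ≠ 0)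
    (κ κbar τ : ℝ)
    (hκ : κ = det3 (r k) (r (k + 1)) (r (k + 2)) / det3 (r (k - 1)) (r k) (r (k + 1)))
    (hκbar : κbar = det3 (r (k + 1)) (t (k - 1)) (r (k + 2)) / det3 (r (k - 1)) (r k) (r (k + 1)))
    (hτ : τ = det3 (t (k - 1)) (t k) (t (k + 1)) / det3 (r (k - 1)) (r k) (r (k + 1))) :
    r (k + 2) = κ • r (k - 1) + (-κ - κbar) • r k + (τ + κbar + 1) • r (k + 1) := by
  have h1 := ht (k - 1)
  have h2 := ht k
  have h3 := ht (k + 1)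
  have e1 : k - 1 + 1 = k := by ring
  have e2 : k + 1 + 1 = k + 2 := by ring
  rw [e1] at h1
  rw [e2] at h3
  rw [h1] at hκbar
  rw [h1, h2, h3] at hτ
  subst hκ hκbar hτ
  simp only [det3, Matrix.det_transpose, Matrix.det_fin_three, Matrix.of_apply,
    Matrix.cons_val', Matrix.cons_val_zero, Matrix.cons_val_one, Matrix.head_cons,
    Matrix.empty_val', Matrix.cons_val_fin_one, Matrix.head_fin_const,
    Matrix.cons_val_two, Matrix.tail_cons, Pi.sub_apply] at hnd ⊢
  have hD := mul_inv_cancel₀ hnd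
  funext i
  simp only [Pi.add_apply, Pi.smul_apply, smul_eq_mul]
  linear_combination (norm := skip) (r (k + 1) i - r (k + 2) i) * hD
  fin_cases i <;> (simp only [Fin.mk_zero, Fin.mk_one, Fin.reduceFinMk]; simp only [div_eq_mul_inv]; ring)
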